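/- Let m ≥ 2 be an integer and let v₀ : [0,∞) → ℝ³ be (m+1)-times continuously differentiable (up to the endpoint s = 0) with |v₀(s)| = 1 for all s ≥ 0, satisfying the compatibility condition (A)_{⌊m/2⌋}: v₀(0) = e₃ and v₀(0) × (∂_s^{2k} v₀)(0) = 0 for 1 ≤ k ≤ ⌊m/2⌋. Define the extension ṽ₀ : ℝ → ℝ³ by ṽ₀(s) = v₀(s) for s ≥ 0 and ṽ₀(s) = −v̄₀(−s) for s < 0, where v̄₀ := (v₀¹, v₀², −v₀³). Then ṽ₀ is m-times continuously differentiable on all of ℝ. -/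

import Mathlib

open scoped InnerProductSpace

noncomputable section

/-- ℝ³ with the Euclidean norm and inner product. -/
abbrev E3 := EuclideanSpace ℝ (Fin 3)

/-- The cross product on ℝ³. -/
def cross (a b : E3) : E3 :=
  WithLp.toLp 2 ![a 1 * b 2 - a 2 * b 1, a 2 * b 0 - a 0 * b 2, a 0 * b 1 - a 1 * b 0]

/-- The vector e₃ = (0,0,1). -/
def e₃ : E3 := WithLp.toLp 2 ![0, 0, 1]

/-- The reflection w̄ = (w¹, w², −w³). -/
def bar (w : E3) : E3 := WithLp.toLp 2 ![w 0, w 1, -(w 2)]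

open Set Finset

section Glue

variable {F : Type*} [NormedAddCommGroup F] [NormedSpace ℝ F]

/-- Gluing a `C^n` function on `[0,∞)` with a `C^n` function on `(-∞,0]` whose
one-sided derivatives match at `0` yields a `C^n` function on `ℝ`. -/
lemma glue_contDiff : ∀ (n : ℕ) (f g : ℝ → F),
    ContDiffOn ℝ n f (Ici 0) → ContDiffOn ℝ n g (Iic 0) →
    (∀ k : ℕ, k ≤ n →
      iteratedDerivWithin k f (Ici 0) 0 = iteratedDerivWithin k g (Iic 0) 0) →
    ContDiff ℝ n (fun s => if 0 ≤ s then f s else g s) := by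
  intro n
  induction n with
  | zero =>
    intro f g hf hg hmatch
    simp only [Nat.cast_zero]
    rw [contDiff_zero]
    have h00 : f 0 = g 0 := by
      have := hmatch 0 (le_refl 0)
      simpa [iteratedDerivWithin_zero] using this
    rw [continuous_iff_continuousAt]
    intro x
    rcases lt_trichotomy x 0 with hx | hx | hx
    · have hev : (fun s => if 0 ≤ s then f s else g s) =ᶠ[nhds x] g := by
        filter_upwards [Iio_mem_nhds hx] with y hy
        simp [not_le.mpr (Set.mem_Iio.mp hy)]
      refine ContinuousAt.congr ?_ hev.symm
      exact (hg.continuousOn.continuousAt (Iic_mem_nhds hx))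
    · subst hx
      have h1 : ContinuousWithinAt (fun s => if 0 ≤ s then f s else g s) (Ici 0) 0 := by
        refine ((hf.continuousOn 0 Set.self_mem_Ici).congr (fun y hy => ?_) (by simp))
        simp [Set.mem_Ici.mp hy]
      have h2 : ContinuousWithinAt (fun s => if 0 ≤ s then f s else g s) (Iic 0) 0 := by
        refine ((hg.continuousOn 0 Set.self_mem_Iic).congr (fun y hy => ?_) (by simp [h00]))
        rcases eq_or_lt_of_le (Set.mem_Iic.mp hy) with h | h
        · simp [h, h00]
        · simp [not_le.mpr h]
      have := h2.union h1
      rwa [Iic_union_Ici, continuousWithinAt_univ] at this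
    · have hev : (fun s => if 0 ≤ s then f s else g s) =ᶠ[nhds x] f := by
        filter_upwards [Ioi_mem_nhds hx] with y hy
        simp [le_of_lt (Set.mem_Ioi.mp hy)]
      refine ContinuousAt.congr ?_ hev.symm
      exact (hf.continuousOn.continuousAt (Ici_mem_nhds hx))
  | succ n IH =>
    intro f g hf hg hmatch
    set f' := derivWithin f (Ici 0) with hf'def
    set g' := derivWithin g (Iic 0) with hg'def
    set h := fun s => if 0 ≤ s then f s else g s with hh
    -- differentiability with explicit derivatives
    have hpos : ∀ x : ℝ, 0 < x → HasDerivAt h (f' x) x := by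
      intro x hx
      have hdf : HasDerivAt f (f' x) x := by
        have := (hf.differentiableOn (by simp) x (Set.mem_Ici.mpr (le_of_lt hx))).hasDerivWithinAt
        exact this.hasDerivAt (Ici_mem_nhds hx)
      refine hdf.congr_of_eventuallyEq ?_
      filter_upwards [Ioi_mem_nhds hx] with y hy
      simp [hh, le_of_lt (Set.mem_Ioi.mp hy)]
    have hneg : ∀ x : ℝ, x < 0 → HasDerivAt h (g' x) x := by
      intro x hx
      have hdg : HasDerivAt g (g' x) x := by
        have := (hg.differentiableOn (by simp) x (Set.mem_Iic.mpr (le_of_lt hx))).hasDerivWithinAt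
        exact this.hasDerivAt (Iic_mem_nhds hx)
      refine hdg.congr_of_eventuallyEq ?_
      filter_upwards [Iio_mem_nhds hx] with y hy
      simp [hh, not_le.mpr (Set.mem_Iio.mp hy)]
    have h10 : f' 0 = g' 0 := by
      have := hmatch 1 (by omega)
      rwa [iteratedDerivWithin_one,
        iteratedDerivWithin_one] at this
    have hzero : HasDerivAt h (f' 0) 0 := by
      have hdf : HasDerivWithinAt h (f' 0) (Ici 0) 0 := by
        refine ((hf.differentiableOn (by simp) 0
          Set.self_mem_Ici).hasDerivWithinAt).congr (fun y hy => ?_) (by simp [hh])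
        simp [hh, Set.mem_Ici.mp hy]
      have hdg : HasDerivWithinAt h (g' 0) (Iic 0) 0 := by
        refine ((hg.differentiableOn (by simp) 0
          Set.self_mem_Iic).hasDerivWithinAt).congr (fun y hy => ?_) ?_
        · rcases eq_or_lt_of_le (Set.mem_Iic.mp hy) with hy' | hy'
          · have h00 : f 0 = g 0 := by
              have := hmatch 0 (by omega)
              simpa [iteratedDerivWithin_zero] using this
            simp [hh, hy', h00]
          · simp [hh, not_le.mpr hy']
        · have h00 : f 0 = g 0 := by
            have := hmatch 0 (by omega)
            simpa [iteratedDerivWithin_zero] using this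
          simp [hh, h00]
      rw [h10] at hdf ⊢
      have := hdg.union hdf
      rwa [Iic_union_Ici, hasDerivWithinAt_univ] at this
    have hdiffall : ∀ x : ℝ, HasDerivAt h (if 0 ≤ x then f' x else g' x) x := by
      intro x
      rcases lt_trichotomy x 0 with hx | hx | hx
      · simpa [not_le.mpr hx] using hneg x hx
      · subst hx; simpa using hzero
      · simpa [le_of_lt hx] using hpos x hx
    have hderiv : deriv h = fun x => if 0 ≤ x then f' x else g' x := by
      funext x
      exact (hdiffall x).deriv
    have hstep : ContDiff ℝ n (deriv h) := by
      rw [hderiv]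
      refine IH f' g' (hf.derivWithin (uniqueDiffOn_Ici 0) (by exact_mod_cast le_refl _))
        (hg.derivWithin (uniqueDiffOn_Iic 0) (by exact_mod_cast le_refl _)) ?_
      intro k hk
      rw [← iteratedDerivWithin_succ',
        ← iteratedDerivWithin_succ']
      exact hmatch (k + 1) (by omega)
    have : ContDiff ℝ ((n : WithTop ℕ∞) + 1) h := by
      rw [contDiff_succ_iff_deriv]
      refine ⟨fun x => (hdiffall x).differentiableAt, ?_, hstep⟩
      intro hcon
      exact absurd hcon (by simp)
    exact_mod_cast this
end Glue

section Reflect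

variable {F G : Type*} [NormedAddCommGroup F] [NormedSpace ℝ F]
  [NormedAddCommGroup G] [NormedSpace ℝ G]

lemma iteratedDerivWithin_reflect {N : ℕ} (f : ℝ → F) (hf : ContDiffOn ℝ N f (Ici 0)) :
    ∀ n : ℕ, n ≤ N → ∀ x ∈ Iic (0:ℝ),
      iteratedDerivWithin n (fun s => f (-s)) (Iic 0) x
        = (-1:ℝ)^n • iteratedDerivWithin n f (Ici 0) (-x) := by
  intro n
  induction n with
  | zero => intro _ x hx; simp
  | succ n IH =>
    intro hn x hx
    have hn' : n ≤ N := by omega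
    rw [iteratedDerivWithin_succ]
    set G0 := iteratedDerivWithin n f (Ici 0) with hG0
    have hEq : Set.EqOn (iteratedDerivWithin n (fun s => f (-s)) (Iic 0))
        (fun y => (-1:ℝ)^n • G0 (-y)) (Iic 0) := fun y hy => IH hn' y hy
    rw [derivWithin_congr hEq (hEq hx)]
    have hGdiff : DifferentiableWithinAt ℝ G0 (Ici 0) (-x) := by
      refine (hf.differentiableOn_iteratedDerivWithin ?_ (uniqueDiffOn_Ici 0)) (-x) ?_
      · exact_mod_cast Nat.lt_of_lt_of_le (Nat.lt_succ_self n) hn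
      · simpa using hx
    have hG : HasDerivWithinAt G0 (derivWithin G0 (Ici 0) (-x)) (Ici 0) (-x) :=
      hGdiff.hasDerivWithinAt
    have hcomp : HasDerivWithinAt (fun y => G0 (-y))
        ((-1 : ℝ) • derivWithin G0 (Ici 0) (-x)) (Iic 0) x := by
      have := HasDerivWithinAt.scomp x hG ((hasDerivAt_neg x).hasDerivWithinAt (s := Iic 0))
        (fun y hy => by simpa using hy)
      simpa [Function.comp_def] using this
    have hfinal := (hcomp.fun_const_smul ((-1:ℝ)^n)).derivWithin ((uniqueDiffOn_Iic 0) x hx)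
    rw [hfinal]
    rw [smul_smul, ← iteratedDerivWithin_succ]
    rw [pow_succ]

lemma iteratedDerivWithin_clm {N : ℕ} (L : F →L[ℝ] G) (f : ℝ → F) {s : Set ℝ}
    (hs : UniqueDiffOn ℝ s) (hf : ContDiffOn ℝ N f s) :
    ∀ n : ℕ, n ≤ N → ∀ x ∈ s,
      iteratedDerivWithin n (fun t => L (f t)) s x = L (iteratedDerivWithin n f s x) := by
  intro n
  induction n with
  | zero => intro _ x hx; simp
  | succ n IH =>
    intro hn x hx
    have hn' : n ≤ N := by omega
    rw [iteratedDerivWithin_succ]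
    set G0 := iteratedDerivWithin n f s with hG0
    have hEq : Set.EqOn (iteratedDerivWithin n (fun t => L (f t)) s)
        (fun y => L (G0 y)) s := fun y hy => IH hn' y hy
    rw [derivWithin_congr hEq (hEq hx)]
    have hGdiff : DifferentiableWithinAt ℝ G0 s x := by
      refine (hf.differentiableOn_iteratedDerivWithin ?_ hs) x hx
      exact_mod_cast Nat.lt_of_lt_of_le (Nat.lt_succ_self n) hn
    have hG : HasDerivWithinAt G0 (derivWithin G0 s x) s x := hGdiff.hasDerivWithinAt
    have hcomp : HasDerivWithinAt (fun y => L (G0 y)) (L (derivWithin G0 s x)) s x :=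
      L.hasFDerivAt.comp_hasDerivWithinAt x hG
    rw [hcomp.derivWithin (hs x hx),
      ← iteratedDerivWithin_succ]

end Reflect

section Leibniz

lemma choose_sum_aux (n : ℕ) (a : ℕ → ℝ) :
    ∑ i ∈ Finset.range (n+1), (n.choose i : ℝ) * (a i + a (i+1))
      = ∑ i ∈ Finset.range (n+2), ((n+1).choose i : ℝ) * a i := by
  have h1 : ∑ i ∈ Finset.range (n+1), (n.choose i : ℝ) * a i
      = (∑ i ∈ Finset.range (n+1), (n.choose (i+1) : ℝ) * a (i+1)) + a 0 := by
    rw [Finset.sum_range_succ' (fun i => (n.choose i : ℝ) * a i) n]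
    rw [Finset.sum_range_succ (fun i => (n.choose (i+1) : ℝ) * a (i+1)) n]
    simp [Nat.choose_succ_self]
  have h2 : ∑ i ∈ Finset.range (n+2), ((n+1).choose i : ℝ) * a i
      = (∑ i ∈ Finset.range (n+1), ((n+1).choose (i+1) : ℝ) * a (i+1)) + a 0 := by
    rw [Finset.sum_range_succ' (fun i => ((n+1).choose i : ℝ) * a i) (n+1)]
    simp
  rw [h2]
  have h3 : ∀ i : ℕ, ((n+1).choose (i+1) : ℝ) = (n.choose i : ℝ) + (n.choose (i+1) : ℝ) := by
    intro i
    rw [Nat.choose_succ_succ]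
    push_cast
    ring
  calc ∑ i ∈ Finset.range (n+1), (n.choose i : ℝ) * (a i + a (i+1))
      = (∑ i ∈ Finset.range (n+1), (n.choose i : ℝ) * a i)
        + ∑ i ∈ Finset.range (n+1), (n.choose i : ℝ) * a (i+1) := by
        rw [← Finset.sum_add_distrib]; congr 1; funext i; ring
    _ = ((∑ i ∈ Finset.range (n+1), (n.choose (i+1) : ℝ) * a (i+1)) + a 0)
        + ∑ i ∈ Finset.range (n+1), (n.choose i : ℝ) * a (i+1) := by rw [h1]
    _ = (∑ i ∈ Finset.range (n+1), ((n+1).choose (i+1) : ℝ) * a (i+1)) + a 0 := by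
        have hc : ∑ i ∈ Finset.range (n+1), (n.choose (i+1) : ℝ) * a (i+1)
            + ∑ i ∈ Finset.range (n+1), (n.choose i : ℝ) * a (i+1)
            = ∑ i ∈ Finset.range (n+1), ((n+1).choose (i+1) : ℝ) * a (i+1) := by
          rw [← Finset.sum_add_distrib]
          refine Finset.sum_congr rfl (fun i _ => ?_)
          rw [h3 i]; ring
        linarith [hc]

lemma leibniz_inner {N : ℕ} (f : ℝ → E3) (hf : ContDiffOn ℝ N f (Ici 0)) :
    ∀ n : ℕ, n ≤ N → ∀ x ∈ Ici (0:ℝ),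
      iteratedDerivWithin n (fun t => ⟪f t, f t⟫_ℝ) (Ici 0) x
        = ∑ i ∈ Finset.range (n+1), (n.choose i : ℝ) *
            ⟪iteratedDerivWithin i f (Ici 0) x, iteratedDerivWithin (n-i) f (Ici 0) x⟫_ℝ := by
  intro n
  induction n with
  | zero => intro _ x hx; simp
  | succ n IH =>
    intro hn x hx
    have hn' : n ≤ N := by omega
    set u := fun (i : ℕ) (y : ℝ) => iteratedDerivWithin i f (Ici 0) y with hu
    rw [iteratedDerivWithin_succ]
    have hEq : Set.EqOn (iteratedDerivWithin n (fun t => ⟪f t, f t⟫_ℝ) (Ici 0))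
        (fun y => ∑ i ∈ Finset.range (n+1), (n.choose i : ℝ) * ⟪u i y, u (n-i) y⟫_ℝ)
        (Ici 0) := fun y hy => IH hn' y hy
    rw [derivWithin_congr hEq (hEq hx)]
    -- each iterated derivative of order ≤ n is differentiable within
    have hudiff : ∀ i : ℕ, i ≤ n → HasDerivWithinAt (u i) (u (i+1) x) (Ici 0) x := by
      intro i hi
      have h1 : DifferentiableWithinAt ℝ (u i) (Ici 0) x := by
        refine (hf.differentiableOn_iteratedDerivWithin ?_ (uniqueDiffOn_Ici 0)) x hx
        exact_mod_cast Nat.lt_of_le_of_lt hi (Nat.lt_of_lt_of_le (Nat.lt_succ_self n) hn)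
      have := h1.hasDerivWithinAt
      rwa [show derivWithin (u i) (Ici 0) x = u (i+1) x from
        (congrFun iteratedDerivWithin_succ x).symm] at this
    have hterm : ∀ i ∈ Finset.range (n+1), HasDerivWithinAt
        (fun y => (n.choose i : ℝ) * ⟪u i y, u (n-i) y⟫_ℝ)
        ((n.choose i : ℝ) * (⟪u i x, u (n-i+1) x⟫_ℝ + ⟪u (i+1) x, u (n-i) x⟫_ℝ))
        (Ici 0) x := by
      intro i hi
      have hi' : i ≤ n := Finset.mem_range_succ_iff.mp hi
      exact ((hudiff i hi').inner ℝ (hudiff (n-i) (Nat.sub_le n i))).const_mul _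
    have hsum := (HasDerivWithinAt.fun_sum hterm).derivWithin ((uniqueDiffOn_Ici 0) x hx)
    rw [hsum]
    have key := choose_sum_aux n (fun j => ⟪u j x, u (n+1-j) x⟫_ℝ)
    rw [← key]
    refine Finset.sum_congr rfl (fun i hi => ?_)
    have hi' : i ≤ n := Finset.mem_range_succ_iff.mp hi
    have e1 : n - i + 1 = n + 1 - i := by omega
    have e2 : n + 1 - (i + 1) = n - i := by omega
    rw [e1, e2]

end Leibniz

/-- If `m ≥ 2`, `v₀ : [0,∞) → ℝ³` is `C^{m+1}` up to the endpoint with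
`|v₀| = 1`, satisfying the compatibility condition `(A)_{⌊m/2⌋}`, then the odd-type
extension `ṽ₀` (with `ṽ₀(s) = −v̄₀(−s)` for `s < 0`) is `C^m` on all of `ℝ`. -/
theorem extension_is_Cm
    (m : ℕ) (hm : 2 ≤ m)
    (v₀ : ℝ → E3) (w : ℝ → E3)
    (hreg : ContDiffOn ℝ (m + 1) v₀ (Set.Ici 0))
    (hunit : ∀ s : ℝ, 0 ≤ s → ‖v₀ s‖ = 1)
    (hA0 : v₀ 0 = e₃)
    (hA : ∀ k : ℕ, 1 ≤ k → k ≤ m / 2 →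
      cross (v₀ 0) (iteratedDerivWithin (2 * k) v₀ (Set.Ici 0) 0) = 0)
    (hw : ∀ s : ℝ, w s = if 0 ≤ s then v₀ s else -bar (v₀ (-s))) :
    ContDiff ℝ m w := by
  -- the iterated one-sided derivatives of v₀ at 0
  set u : ℕ → E3 := fun k => iteratedDerivWithin k v₀ (Set.Ici 0) 0 with hudef
  have hregN : ContDiffOn ℝ (m+1 : ℕ) v₀ (Set.Ici 0) := by exact_mod_cast hreg
  -- even derivatives: first two components vanish
  have heven : ∀ k : ℕ, k ≤ m → Even k → u k 0 = 0 ∧ u k 1 = 0 := by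
    intro k hk hkeven
    rcases Nat.eq_zero_or_pos k with hk0 | hkpos
    · subst hk0
      have : u 0 = e₃ := by simp [hudef, iteratedDerivWithin_zero, hA0]
      rw [this]
      constructor <;> simp [e₃]
    · obtain ⟨j, hj⟩ := hkeven
      have hj1 : 1 ≤ j := by omega
      have hj2 : j ≤ m / 2 := by
        rw [Nat.le_div_iff_mul_le (by norm_num)]
        omega
      have hcross := hA j hj1 hj2
      rw [hA0] at hcross
      rw [show 2 * j = k by omega] at hcross
      have h0 : cross e₃ (u k) 0 = (0 : E3) 0 := by rw [← hcross]
      have h1 : cross e₃ (u k) 1 = (0 : E3) 1 := by rw [← hcross]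
      simp [cross, e₃] at h0 h1
      constructor
      · simpa using h1
      · simpa using h0
  -- the unit norm condition as inner product
  have hinner1 : ∀ s : ℝ, s ∈ Set.Ici (0:ℝ) → ⟪v₀ s, v₀ s⟫_ℝ = 1 := by
    intro s hs
    have := hunit s hs
    rw [real_inner_self_eq_norm_mul_norm, this, one_mul]
  -- odd derivatives: third component vanishes
  have hodd : ∀ k : ℕ, k ≤ m → Odd k → u k 2 = 0 := by
    intro k
    induction k using Nat.strong_induction_on with
    | _ k IH =>
    intro hk hkodd
    have hk1 : 1 ≤ k := hkodd.pos
    -- iterated derivative of constant 1 is 0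
    have hconst : iteratedDerivWithin k (fun t => ⟪v₀ t, v₀ t⟫_ℝ) (Set.Ici 0) 0 = 0 := by
      have hEq : Set.EqOn (fun t => ⟪v₀ t, v₀ t⟫_ℝ) (fun _ => (1:ℝ)) (Set.Ici 0) :=
        fun s hs => hinner1 s hs
      rw [iteratedDerivWithin_congr hEq Set.self_mem_Ici]
      rw [iteratedDerivWithin_eq_iteratedFDerivWithin,
        iteratedFDerivWithin_const_of_ne (by omega) _ _]
      simp
    have hleib := leibniz_inner v₀ hregN k (by omega) 0 Set.self_mem_Ici
    rw [hconst] at hleib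
    -- middle terms vanish
    have hmid : ∀ i : ℕ, 1 ≤ i → i ≤ k - 1 →
        ⟪u i, u (k-i)⟫_ℝ = 0 := by
      intro i hi1 hi2
      have hik : i ≤ k := by omega
      have hcases : Even i ∨ Even (k - i) := by
        rcases Nat.even_or_odd i with h | h
        · exact Or.inl h
        · right
          obtain ⟨a, ha⟩ := hkodd
          obtain ⟨b, hb⟩ := h
          exact ⟨a - b, by omega⟩
      have hinner_eq : ⟪u i, u (k-i)⟫_ℝ
          = u i 0 * u (k-i) 0 + u i 1 * u (k-i) 1 + u i 2 * u (k-i) 2 := by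
        rw [PiLp.inner_apply]
        simp [Fin.sum_univ_three, RCLike.inner_apply, conj_trivial]
        ring
      rcases hcases with h | h
      · -- i even, k - i odd and < k
        have hie := heven i (by omega) h
        have hkio : Odd (k - i) := by
          obtain ⟨a, ha⟩ := hkodd
          obtain ⟨b, hb⟩ := h
          exact ⟨a - b, by omega⟩
        have hki3 : u (k-i) 2 = 0 := IH (k-i) (by omega) (by omega) hkio
        rw [hinner_eq, hie.1, hie.2, hki3]
        ring
      · have hkie := heven (k-i) (by omega) h
        have hio : Odd i := by
          obtain ⟨a, ha⟩ := hkodd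
          obtain ⟨b, hb⟩ := h
          exact ⟨a - b, by omega⟩
        have hi3 : u i 2 = 0 := IH i (by omega) (by omega) hio
        rw [hinner_eq, hkie.1, hkie.2, hi3]
        ring
    -- the sum reduces to boundary terms
    have hu0 : u 0 = e₃ := by simp [hudef, iteratedDerivWithin_zero, hA0]
    have hbdy : ∀ j : ℕ, ⟪u 0, u j⟫_ℝ = u j 2 := by
      intro j
      rw [hu0, PiLp.inner_apply]
      simp [Fin.sum_univ_three, RCLike.inner_apply, conj_trivial, e₃]
    have hsum0 : (0:ℝ) = ∑ i ∈ Finset.range (k+1), (k.choose i : ℝ) *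
        ⟪u i, u (k-i)⟫_ℝ := hleib
    -- evaluate the sum
    have hsum_eval : ∑ i ∈ Finset.range (k+1), (k.choose i : ℝ) * ⟪u i, u (k-i)⟫_ℝ
        = u k 2 + u k 2 := by
      have hsplit : ∀ i ∈ Finset.range (k+1), (k.choose i : ℝ) * ⟪u i, u (k-i)⟫_ℝ
          = (if i = 0 then u k 2 else 0) + (if i = k then u k 2 else 0) := by
        intro i hi
        have hik : i ≤ k := Finset.mem_range_succ_iff.mp hi
        rcases eq_or_ne i 0 with h0 | h0
        · subst h0
          have : (k:ℕ) - 0 = k := Nat.sub_zero k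
          simp [this, hbdy k]
          intro h0k
          exact absurd h0k (by omega)
        · rcases eq_or_ne i k with hk' | hk'
          · subst hk'
            have h1 : ⟪u i, u (i - i)⟫_ℝ = u i 2 := by
              rw [Nat.sub_self, real_inner_comm, hbdy i]
            rw [h1, Nat.choose_self, if_neg h0, if_pos rfl]
            push_cast
            ring
          · have := hmid i (by omega) (by omega)
            simp [h0, hk', this]
      rw [Finset.sum_congr rfl hsplit, Finset.sum_add_distrib]
      rw [Finset.sum_ite_eq' (Finset.range (k+1)) 0 (fun _ => u k 2),
        Finset.sum_ite_eq' (Finset.range (k+1)) k (fun _ => u k 2)]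
      simp
    rw [hsum_eval] at hsum0
    linarith
  -- bar expressed pointwise
  have hbar0 : ∀ x : E3, bar x 0 = x 0 := fun x => rfl
  have hbar1 : ∀ x : E3, bar x 1 = x 1 := fun x => rfl
  have hbar2 : ∀ x : E3, bar x 2 = -(x 2) := fun x => rfl
  -- -bar as a continuous linear map
  set L : E3 →L[ℝ] E3 :=
    (2:ℝ) • ((EuclideanSpace.proj (2 : Fin 3)).smulRight e₃) - ContinuousLinearMap.id ℝ E3
    with hLdef
  have hproj : ∀ x : E3, (EuclideanSpace.proj (2 : Fin 3)) x = x 2 := fun _ => rfl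
  have hL : ∀ x : E3, L x = -bar x := by
    intro x
    ext i
    fin_cases i <;>
      simp [hLdef, ContinuousLinearMap.smul_apply, ContinuousLinearMap.sub_apply,
        ContinuousLinearMap.smulRight_apply, ContinuousLinearMap.id_apply,
        hproj, PiLp.smul_apply, PiLp.sub_apply, PiLp.neg_apply,
        smul_eq_mul, bar, e₃] <;> ring
  set gneg : ℝ → E3 := fun s => -bar (v₀ (-s)) with hgdef
  have hgeq : gneg = fun s => L (v₀ (-s)) := by
    funext s; rw [hL]
  -- regularity of the left piece
  have hFreg : ContDiffOn ℝ (m+1 : ℕ) (fun t => L (v₀ t)) (Set.Ici 0) :=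
    L.contDiff.comp_contDiffOn hregN
  have hgreg : ContDiffOn ℝ (m : ℕ) gneg (Set.Iic 0) := by
    rw [hgeq]
    have hneg : ContDiffOn ℝ (m+1 : ℕ) (fun s : ℝ => -s) (Set.Iic 0) :=
      (contDiff_neg).contDiffOn
    have hmaps : Set.MapsTo (fun s : ℝ => -s) (Set.Iic 0) (Set.Ici 0) := by
      intro y hy; simpa using hy
    exact (hFreg.comp hneg hmaps).of_le (by exact_mod_cast Nat.le_succ m)
  -- matching of the one-sided derivatives
  have hmatch : ∀ k : ℕ, k ≤ m →
      iteratedDerivWithin k v₀ (Set.Ici 0) 0 = iteratedDerivWithin k gneg (Set.Iic 0) 0 := by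
    intro k hk
    have h1 : iteratedDerivWithin k gneg (Set.Iic 0) 0
        = (-1:ℝ)^k • iteratedDerivWithin k (fun t => L (v₀ t)) (Set.Ici 0) (-0) := by
      rw [hgeq]
      exact iteratedDerivWithin_reflect (fun t => L (v₀ t)) hFreg k (by omega) 0
        Set.self_mem_Iic
    rw [neg_zero] at h1
    have h2 : iteratedDerivWithin k (fun t => L (v₀ t)) (Set.Ici 0) 0 = L (u k) :=
      iteratedDerivWithin_clm L v₀ (uniqueDiffOn_Ici 0) hregN k (by omega) 0
        Set.self_mem_Ici
    rw [h2] at h1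
    rw [h1, hL]
    -- now show u k = (-1)^k • (-bar (u k)) componentwise
    show u k = (-1:ℝ)^k • -bar (u k)
    rcases Nat.even_or_odd k with hke | hko
    · have h01 := heven k hk hke
      have hpow : (-1:ℝ)^k = 1 := hke.neg_one_pow
      rw [hpow, one_smul]
      ext i
      fin_cases i
      · show u k 0 = (-bar (u k)) 0
        rw [PiLp.neg_apply, hbar0, h01.1]; try ring
      · show u k 1 = (-bar (u k)) 1
        rw [PiLp.neg_apply, hbar1, h01.2]; try ring
      · show u k 2 = (-bar (u k)) 2
        rw [PiLp.neg_apply, hbar2]; try ring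
    · have h2c := hodd k hk hko
      have hpow : (-1:ℝ)^k = -1 := hko.neg_one_pow
      rw [hpow]
      ext i
      fin_cases i
      · show u k 0 = ((-1:ℝ) • -bar (u k)) 0
        rw [PiLp.smul_apply, PiLp.neg_apply, hbar0, smul_eq_mul]; try ring
      · show u k 1 = ((-1:ℝ) • -bar (u k)) 1
        rw [PiLp.smul_apply, PiLp.neg_apply, hbar1, smul_eq_mul]; try ring
      · show u k 2 = ((-1:ℝ) • -bar (u k)) 2
        rw [PiLp.smul_apply, PiLp.neg_apply, hbar2, smul_eq_mul, h2c]; try ring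
  -- glue
  have hglue := glue_contDiff m v₀ gneg
    (hregN.of_le (by exact_mod_cast Nat.le_succ m)) hgreg hmatch
  have hwfun : w = fun s => if 0 ≤ s then v₀ s else gneg s := funext hw
  rw [hwfun]
  exact_mod_cast hglue
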